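/- Let ((X_t, v_t))_{t∈ℤ} be a strictly stationary Skellam-ARCH(p) process with parameters ω ≥ 0 and non-negative α_1,…,α_p. If α = ∑_{i=1}^p α_i < 1, then E[X_0²] < ∞; in fact E[X_0²] ≤ ω/(1−α). -/

import Mathlib

open MeasureTheory ProbabilityTheory ENNReal

/-- The Skellam distribution `Skellam(μ₁, μ₂)`: the law of `N₁ - N₂` for independent
`N₁ ∼ Poisson(μ₁)`, `N₂ ∼ Poisson(μ₂)`. -/
noncomputable def skellam (μ1 μ2 : NNReal) : Measure ℤ :=
  ((poissonMeasure μ1).prod (poissonMeasure μ2)).map (fun nm => (nm.1 : ℤ) - (nm.2 : ℤ))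

lemma poisson_singleton (r : NNReal) (n : ℕ) :
    poissonMeasure r {n} = ENNReal.ofReal (poissonPMFReal r n) := by
  rw [poissonMeasure_singleton]
  rfl

lemma poisson_lint (r : NNReal) (f : ℕ → ℝ≥0∞) :
    ∫⁻ n, f n ∂(poissonMeasure r) = ∑' n, f n * ENNReal.ofReal (poissonPMFReal r n) := by
  rw [lintegral_countable' f]
  simp_rw [poisson_singleton]

lemma poisson_pmf_tsum (r : NNReal) :
    ∑' n, ENNReal.ofReal (poissonPMFReal r n) = 1 := by
  have : (poissonMeasure r) Set.univ = 1 := measure_univ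
  rw [← this, ← lintegral_one, poisson_lint]
  simp

lemma ennreal_tsum_shift (f : ℕ → ℝ≥0∞) :
    ∑' n, f n = f 0 + ∑' n, f (n+1) :=
  tsum_eq_zero_add' ENNReal.summable

lemma poisson_shift (r : NNReal) (n : ℕ) :
    ((n+1 : ℕ) : ℝ≥0∞) * ENNReal.ofReal (poissonPMFReal r (n+1))
      = (r : ℝ≥0∞) * ENNReal.ofReal (poissonPMFReal r n) := by
  rw [show ((n+1:ℕ) : ℝ≥0∞) = ENNReal.ofReal ((n+1:ℕ) : ℝ) by
        rw [ENNReal.ofReal_natCast],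
      show (r : ℝ≥0∞) = ENNReal.ofReal (r:ℝ) by rw [ENNReal.ofReal_coe_nnreal],
      ← ENNReal.ofReal_mul (by positivity), ← ENNReal.ofReal_mul (by positivity)]
  congr 1
  unfold poissonPMFReal
  rw [Nat.factorial_succ]
  push_cast
  have hn : ((n:ℝ)+1) ≠ 0 := by positivity
  field_simp
  ring

lemma poisson_m1 (r : NNReal) :
    ∫⁻ n, (n : ℝ≥0∞) ∂(poissonMeasure r) = r := by
  rw [poisson_lint, ennreal_tsum_shift (fun n => (n:ℝ≥0∞) * ENNReal.ofReal (poissonPMFReal r n))]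
  simp only [Nat.cast_zero, zero_mul, zero_add]
  rw [tsum_congr (fun n => poisson_shift r n), ENNReal.tsum_mul_left, poisson_pmf_tsum, mul_one]

lemma poisson_m2 (r : NNReal) :
    ∫⁻ n, (n : ℝ≥0∞)^2 ∂(poissonMeasure r) = r^2 + r := by
  have key : ∀ n : ℕ, (n : ℝ≥0∞)^2 = ((n*(n-1) : ℕ) : ℝ≥0∞) + (n : ℝ≥0∞) := by
    intro n
    cases n with
    | zero => simp
    | succ m => push_cast [Nat.succ_sub_one]; ring
  rw [lintegral_congr (fun n => key n),
      lintegral_add_right _ (measurable_of_countable _), poisson_m1]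
  congr 1
  have step : ∀ n : ℕ, (((n+2)*((n+2)-1) : ℕ) : ℝ≥0∞) * ENNReal.ofReal (poissonPMFReal r (n+2))
      = (r : ℝ≥0∞) * ((r:ℝ≥0∞) * ENNReal.ofReal (poissonPMFReal r n)) := by
    intro n
    have e1 : (((n+2)*((n+2)-1) : ℕ) : ℝ≥0∞) = ((n+1:ℕ):ℝ≥0∞) * ((n+2 : ℕ):ℝ≥0∞) := by
      push_cast [Nat.succ_sub_one]; ring
    have e2 : (n+2) = (n+1)+1 := rfl
    rw [e1, mul_assoc, e2, poisson_shift r (n+1)]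
    rw [show ((n+1:ℕ):ℝ≥0∞) * ((r:ℝ≥0∞) * ENNReal.ofReal (poissonPMFReal r (n+1)))
          = (r:ℝ≥0∞) * (((n+1:ℕ):ℝ≥0∞) * ENNReal.ofReal (poissonPMFReal r (n+1))) by ring,
        poisson_shift r n]
  rw [poisson_lint,
      tsum_eq_zero_add' ENNReal.summable, tsum_eq_zero_add' ENNReal.summable]
  have z0 : (((0*(0-1) : ℕ)) : ℝ≥0∞) * ENNReal.ofReal (poissonPMFReal r 0) = 0 := by norm_num
  have z1 : (((0+1)*((0+1)-1) : ℕ) : ℝ≥0∞) * ENNReal.ofReal (poissonPMFReal r (0+1)) = 0 := by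
    norm_num
  rw [z0, z1, zero_add, zero_add]
  rw [tsum_congr (fun n => step n), ENNReal.tsum_mul_left, ENNReal.tsum_mul_left,
      poisson_pmf_tsum]
  ring

lemma measurable_sub_fun : Measurable (fun nm : ℕ × ℕ => (nm.1 : ℤ) - (nm.2 : ℤ)) :=
  measurable_of_countable _

instance skellam_prob (μ1 μ2 : NNReal) : IsProbabilityMeasure (skellam μ1 μ2) := by
  rw [skellam]
  exact Measure.isProbabilityMeasure_map measurable_sub_fun.aemeasurable

lemma skellam_lintegral (μ1 μ2 : NNReal) (f : ℤ → ℝ≥0∞) :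
    ∫⁻ k, f k ∂(skellam μ1 μ2)
      = ∫⁻ nm, f ((nm.1 : ℤ) - (nm.2 : ℤ)) ∂((poissonMeasure μ1).prod (poissonMeasure μ2)) := by
  rw [skellam, lintegral_map (measurable_of_countable f) measurable_sub_fun]

lemma skellam_m2 (r : NNReal) :
    ∫⁻ k, ((k.natAbs : ℝ≥0∞))^2 ∂(skellam r r) = 2 * r := by
  set P := (poissonMeasure r).prod (poissonMeasure r) with hP
  have key : ∀ nm : ℕ × ℕ, ((((nm.1:ℤ) - (nm.2:ℤ)).natAbs : ℝ≥0∞))^2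
      + 2 * ((nm.1 : ℝ≥0∞) * (nm.2 : ℝ≥0∞))
      = (nm.1 : ℝ≥0∞)^2 + (nm.2 : ℝ≥0∞)^2 := by
    rintro ⟨n, m⟩
    have hnat : (((n:ℤ) - (m:ℤ)).natAbs)^2 + 2 * (n * m) = n^2 + m^2 := by
      have h := Int.natAbs_sq ((n:ℤ) - (m:ℤ))
      zify
      rw [sq_abs]
      ring
    calc ((((n:ℤ) - (m:ℤ)).natAbs : ℝ≥0∞))^2 + 2 * ((n : ℝ≥0∞) * (m : ℝ≥0∞))
        = (((((n:ℤ) - (m:ℤ)).natAbs)^2 + 2 * (n * m) : ℕ) : ℝ≥0∞) := by push_cast; ring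
      _ = ((n^2 + m^2 : ℕ) : ℝ≥0∞) := by rw [hnat]
      _ = (n : ℝ≥0∞)^2 + (m : ℝ≥0∞)^2 := by push_cast; ring
  have hsum : (∫⁻ k, ((k.natAbs : ℝ≥0∞))^2 ∂(skellam r r)) + 2 * (r * r : ℝ≥0∞)
      = (r^2 + r) + (r^2 + r) := by
    have hcross : ∫⁻ nm : ℕ × ℕ, (nm.1 : ℝ≥0∞) * (nm.2 : ℝ≥0∞) ∂P = (r : ℝ≥0∞) * r := by
      rw [hP, lintegral_prod_mul (measurable_of_countable _).aemeasurable
            (measurable_of_countable _).aemeasurable, poisson_m1]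
    have hsq : ∫⁻ nm : ℕ × ℕ, ((nm.1 : ℝ≥0∞)^2 + (nm.2 : ℝ≥0∞)^2) ∂P
        = (r^2 + r) + (r^2 + r) := by
      rw [hP, lintegral_add_left (measurable_of_countable _)]
      have h1 : ∫⁻ nm : ℕ × ℕ, (nm.1 : ℝ≥0∞)^2 ∂((poissonMeasure r).prod (poissonMeasure r))
          = r^2 + r := by
        rw [MeasureTheory.lintegral_prod _ (measurable_of_countable _).aemeasurable]
        simp only [lintegral_const, measure_univ, mul_one]
        exact poisson_m2 r
      have h2 : ∫⁻ nm : ℕ × ℕ, (nm.2 : ℝ≥0∞)^2 ∂((poissonMeasure r).prod (poissonMeasure r))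
          = r^2 + r := by
        rw [MeasureTheory.lintegral_prod _ (measurable_of_countable _).aemeasurable]
        simp only [lintegral_const]
        rw [poisson_m2]
        simp [measure_univ]
      rw [h1, h2]
    calc (∫⁻ k, ((k.natAbs : ℝ≥0∞))^2 ∂(skellam r r)) + 2 * (r * r : ℝ≥0∞)
        = (∫⁻ nm, ((((nm.1:ℤ) - (nm.2:ℤ)).natAbs : ℝ≥0∞))^2 ∂P)
            + ∫⁻ nm : ℕ × ℕ, 2 * ((nm.1 : ℝ≥0∞) * (nm.2 : ℝ≥0∞)) ∂P := by
          rw [skellam_lintegral, ← hP, lintegral_const_mul 2 (measurable_of_countable _), hcross]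
      _ = ∫⁻ nm : ℕ × ℕ, (((((nm.1:ℤ) - (nm.2:ℤ)).natAbs : ℝ≥0∞))^2
            + 2 * ((nm.1 : ℝ≥0∞) * (nm.2 : ℝ≥0∞))) ∂P := by
          rw [← lintegral_add_left (measurable_of_countable _)]
      _ = ∫⁻ nm : ℕ × ℕ, ((nm.1 : ℝ≥0∞)^2 + (nm.2 : ℝ≥0∞)^2) ∂P :=
          lintegral_congr (fun nm => key nm)
      _ = (r^2 + r) + (r^2 + r) := hsq
  have hfin : (2 * (r * r : ℝ≥0∞)) ≠ ⊤ := by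
    refine ENNReal.mul_ne_top (by norm_num) (ENNReal.mul_ne_top ?_ ?_) <;> exact ENNReal.coe_ne_top
  have : (r^2 + r) + (r^2 + r) = 2 * r + 2 * (r * r : ℝ≥0∞) := by ring
  rw [this] at hsum
  rw [add_comm (∫⁻ k, ((k.natAbs : ℝ≥0∞))^2 ∂(skellam r r)) _,
      add_comm (2*(r:ℝ≥0∞)) _] at hsum
  exact (ENNReal.add_right_inj hfin).mp hsum

lemma skellam_half_m2 (vv : NNReal) :
    ∫⁻ k, ((k.natAbs : ℝ≥0∞))^2 ∂(skellam (vv/2) (vv/2)) = (vv : ℝ≥0∞) := by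
  rw [skellam_m2]
  rw [← ENNReal.coe_ofNat, ← ENNReal.coe_mul]
  norm_cast
  rw [mul_comm]
  exact div_mul_cancel₀ vv (by norm_num)

lemma skellam_bound (vv : NNReal) (c rr N : ℝ≥0∞) :
    ∫⁻ k, ((c * ((k.natAbs : ℝ≥0∞))^2 + rr) ⊓ N) ∂(skellam (vv/2) (vv/2))
      ≤ (c * vv + rr) ⊓ N := by
  refine le_inf ?_ ?_
  · refine le_trans (lintegral_mono (fun k => inf_le_left)) ?_
    rw [lintegral_add_right _ measurable_const, lintegral_const_mul c (measurable_of_countable _),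
        skellam_half_m2, lintegral_const, measure_univ, mul_one]
  · refine le_trans (lintegral_mono (fun k => inf_le_right)) ?_
    rw [lintegral_const, measure_univ, mul_one]

lemma skellam_singleton (μ1 μ2 : NNReal) (k : ℤ) :
    skellam μ1 μ2 {k} = ∑' nm : ℕ × ℕ,
      (if (nm.1 : ℤ) - (nm.2 : ℤ) = k then
        ENNReal.ofReal (poissonPMFReal μ1 nm.1) * ENNReal.ofReal (poissonPMFReal μ2 nm.2)
       else 0) := by
  rw [skellam, Measure.map_apply measurable_sub_fun (measurableSet_singleton k)]
  have : ((poissonMeasure μ1).prod (poissonMeasure μ2))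
        ((fun nm : ℕ × ℕ => (nm.1 : ℤ) - (nm.2 : ℤ)) ⁻¹' {k})
      = ∫⁻ nm : ℕ × ℕ, Set.indicator ((fun nm : ℕ × ℕ => (nm.1 : ℤ) - (nm.2 : ℤ)) ⁻¹' {k})
          (fun _ => 1) nm ∂((poissonMeasure μ1).prod (poissonMeasure μ2)) := by
    rw [lintegral_indicator (measurable_sub_fun (measurableSet_singleton k)), lintegral_one,
        Measure.restrict_apply_univ]
  rw [this, lintegral_countable' _]
  refine tsum_congr (fun nm => ?_)
  rw [show ({nm} : Set (ℕ × ℕ)) = {nm.1} ×ˢ {nm.2} by rw [Set.singleton_prod_singleton]]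
  rw [Measure.prod_prod, poisson_singleton, poisson_singleton]
  by_cases h : (nm.1 : ℤ) - (nm.2 : ℤ) = k
  · simp [Set.indicator_apply, Set.mem_preimage, h]
  · simp [Set.indicator_apply, Set.mem_preimage, h]

lemma skellam_singleton_measurable (k : ℤ) :
    Measurable (fun r : NNReal => skellam (r/2) (r/2) {k}) := by
  simp_rw [skellam_singleton]
  refine Measurable.ennreal_tsum (fun nm => ?_)
  by_cases h : (nm.1 : ℤ) - (nm.2 : ℤ) = k
  · simp only [h, if_true]
    refine Measurable.fun_mul ?_ ?_ <;>
    · refine ENNReal.measurable_ofReal.comp ?_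
      unfold poissonPMFReal
      fun_prop
  · simp [h]

lemma integrable_of_bdd {Ω : Type*} [MeasurableSpace Ω] {μ : Measure Ω} [IsProbabilityMeasure μ]
    {f : Ω → ℝ} (hf : Measurable f) (C : ℝ) (hb : ∀ ω, |f ω| ≤ C) : Integrable f μ :=
  Integrable.mono' (integrable_const C) hf.aestronglyMeasurable (Filter.Eventually.of_forall hb)

lemma transfer {Ω : Type*} (m' : MeasurableSpace Ω) [mΩ : MeasurableSpace Ω]
    (μ : Measure Ω) [IsProbabilityMeasure μ]
    (X0 : Ω → ℤ) (v0 : Ω → NNReal) (hX0 : Measurable X0) (hv0 : Measurable v0)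
    (hm' : m' ≤ mΩ)
    (hcond0 : ∀ (A : Set ℤ), MeasurableSet A →
      (fun ω => ((skellam (v0 ω / 2) (v0 ω / 2)) A).toReal)
        =ᵐ[μ] μ[fun ω => A.indicator (fun _ => (1 : ℝ)) (X0 ω) | m'])
    (N : ℝ≥0∞) (hN : N ≠ ⊤) (Φ : ℤ → Ω → ℝ≥0∞)
    (hΦm : ∀ k, Measurable[m'] (Φ k)) (hΦb : ∀ k ω, Φ k ω ≤ N) :
    ∫⁻ ω, Φ (X0 ω) ω ∂μ = ∫⁻ ω, ∫⁻ k, Φ k ω ∂(skellam (v0 ω/2) (v0 ω/2)) ∂μ := by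
  have hΦmb : ∀ k, Measurable (Φ k) := fun k => (hΦm k).mono hm' le_rfl
  have hΦfin : ∀ k ω, Φ k ω ≠ ⊤ := fun k ω => ne_top_of_le_ne_top hN (hΦb k ω)
  have hskm : ∀ k : ℤ, Measurable (fun ω => skellam (v0 ω/2) (v0 ω/2) {k}) :=
    fun k => (skellam_singleton_measurable k).comp hv0
  have hsk1 : ∀ (k : ℤ) (ω : Ω), skellam (v0 ω/2) (v0 ω/2) {k} ≤ 1 :=
    fun k ω => prob_le_one
  have hgm : ∀ k : ℤ, Measurable (fun ω => if X0 ω = k then Φ k ω else 0) :=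
    fun k => Measurable.ite (hX0 (measurableSet_singleton k)) (hΦmb k) measurable_const
  -- per-k identity
  have key : ∀ k : ℤ, ∫⁻ ω, (if X0 ω = k then Φ k ω else 0) ∂μ
      = ∫⁻ ω, skellam (v0 ω/2) (v0 ω/2) {k} * Φ k ω ∂μ := by
    intro k
    set f : Ω → ℝ := fun ω => ({k} : Set ℤ).indicator (fun _ => (1 : ℝ)) (X0 ω) with hf
    set h : Ω → ℝ := fun ω => (Φ k ω).toReal with hh
    have hfmeas : Measurable f := by
      have : f = fun ω => if X0 ω = k then (1:ℝ) else 0 := by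
        funext ω; simp [hf, Set.indicator_apply]
      rw [this]
      exact Measurable.ite (hX0 (measurableSet_singleton k)) measurable_const measurable_const
    have hfb : ∀ ω, |f ω| ≤ 1 := by
      intro ω; simp only [hf, Set.indicator_apply]
      split <;> simp
    have hhb : ∀ ω, |h ω| ≤ N.toReal := by
      intro ω
      rw [hh, abs_of_nonneg ENNReal.toReal_nonneg]
      exact ENNReal.toReal_mono hN (hΦb k ω)
    have hhm' : StronglyMeasurable[m'] h :=
      (Measurable.ennreal_toReal (hΦm k)).stronglyMeasurable
    have hfint : Integrable f μ := integrable_of_bdd hfmeas 1 hfb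
    have hhfint : Integrable (h * f) μ := by
      refine integrable_of_bdd (((hΦmb k).ennreal_toReal).mul hfmeas) (N.toReal * 1) ?_
      intro ω
      rw [Pi.mul_apply, abs_mul]
      exact mul_le_mul (hhb ω) (hfb ω) (abs_nonneg _) ENNReal.toReal_nonneg
    have e1 : μ[h * f|m'] =ᵐ[μ] h * μ[f|m'] := condExp_mul_of_stronglyMeasurable_left hhm' hhfint hfint
    have e2 : ∫ ω, (h * f) ω ∂μ = ∫ ω, (h * μ[f|m']) ω ∂μ := by
      rw [← integral_condExp hm' (f := h * f)]
      exact integral_congr_ae e1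
    have e3 : ∫ ω, (h * μ[f|m']) ω ∂μ
        = ∫ ω, h ω * (skellam (v0 ω/2) (v0 ω/2) {k}).toReal ∂μ := by
      refine integral_congr_ae ?_
      filter_upwards [hcond0 {k} (measurableSet_singleton k)] with ω hω
      rw [Pi.mul_apply, ← hω]
    have e4 : ∫ ω, (h * f) ω ∂μ = ∫ ω, h ω * (skellam (v0 ω/2) (v0 ω/2) {k}).toReal ∂μ :=
      e2.trans e3
    -- now lift to lintegral
    have l1 : ENNReal.ofReal (∫ ω, (h * f) ω ∂μ)
        = ∫⁻ ω, (if X0 ω = k then Φ k ω else 0) ∂μ := by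
      rw [ofReal_integral_eq_lintegral_ofReal hhfint]
      · refine lintegral_congr (fun ω => ?_)
        simp only [Pi.mul_apply, hh, hf, Set.indicator_apply, Set.mem_singleton_iff]
        split
        · rw [mul_one, ENNReal.ofReal_toReal (hΦfin k ω)]
        · rw [mul_zero, ENNReal.ofReal_zero]
      · refine Filter.Eventually.of_forall (fun ω => ?_)
        simp only [Pi.mul_apply, hh, hf, Set.indicator_apply]
        split
        · rw [mul_one]; exact ENNReal.toReal_nonneg
        · rw [mul_zero]; exact le_rfl
    have hrint : Integrable (fun ω => h ω * (skellam (v0 ω/2) (v0 ω/2) {k}).toReal) μ := by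
      refine integrable_of_bdd (((hΦmb k).ennreal_toReal).mul ((hskm k).ennreal_toReal))
        (N.toReal * 1) ?_
      intro ω
      rw [abs_mul]
      refine mul_le_mul (hhb ω) ?_ (abs_nonneg _) ENNReal.toReal_nonneg
      rw [abs_of_nonneg ENNReal.toReal_nonneg]
      exact ENNReal.toReal_mono one_ne_top (hsk1 k ω)
    have l2 : ENNReal.ofReal (∫ ω, h ω * (skellam (v0 ω/2) (v0 ω/2) {k}).toReal ∂μ)
        = ∫⁻ ω, skellam (v0 ω/2) (v0 ω/2) {k} * Φ k ω ∂μ := by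
      rw [ofReal_integral_eq_lintegral_ofReal hrint
        (Filter.Eventually.of_forall (fun ω =>
          mul_nonneg ENNReal.toReal_nonneg ENNReal.toReal_nonneg))]
      refine lintegral_congr (fun ω => ?_)
      rw [ENNReal.ofReal_mul ENNReal.toReal_nonneg, ENNReal.ofReal_toReal (hΦfin k ω),
          ENNReal.ofReal_toReal (ne_top_of_le_ne_top one_ne_top (hsk1 k ω)), mul_comm]
    rw [← l1, ← l2, e4]
  -- assemble
  have lhs : ∫⁻ ω, Φ (X0 ω) ω ∂μ = ∑' k : ℤ, ∫⁻ ω, (if X0 ω = k then Φ k ω else 0) ∂μ := by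
    rw [← lintegral_tsum (fun k => (hgm k).aemeasurable)]
    refine lintegral_congr (fun ω => ?_)
    rw [tsum_eq_single (X0 ω) (fun k hk => by rw [if_neg (fun hc => hk hc.symm)])]
    rw [if_pos rfl]
  have rhs : ∫⁻ ω, ∫⁻ k, Φ k ω ∂(skellam (v0 ω/2) (v0 ω/2)) ∂μ
      = ∑' k : ℤ, ∫⁻ ω, skellam (v0 ω/2) (v0 ω/2) {k} * Φ k ω ∂μ := by
    rw [← lintegral_tsum (fun k => ((hskm k).fun_mul (hΦmb k)).aemeasurable)]
    refine lintegral_congr (fun ω => ?_)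
    rw [lintegral_countable' (fun k => Φ k ω)]
    exact tsum_congr (fun k => mul_comm _ _)
  rw [lhs, rhs]
  exact tsum_congr key

lemma ennreal_mul_inf (c a b : ℝ≥0∞) : c * (a ⊓ b) = (c * a) ⊓ (c * b) := by
  rcases le_total a b with h | h
  · rw [inf_eq_left.mpr h, inf_eq_left.mpr (mul_le_mul_right h c)]
  · rw [inf_eq_right.mpr h, inf_eq_right.mpr (mul_le_mul_right h c)]

lemma ennreal_isup_inf_nat (x : ℝ≥0∞) (hx : x ≠ ⊤) : (⨆ n : ℕ, x ⊓ (n : ℝ≥0∞)) = x := by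
  refine le_antisymm (iSup_le (fun n => inf_le_left)) ?_
  obtain ⟨n, hn⟩ := ENNReal.exists_nat_gt hx
  exact le_trans (le_inf le_rfl hn.le) (le_iSup (fun n : ℕ => x ⊓ (n:ℝ≥0∞)) n)

lemma lintegral_eq_isup_inf {Ω : Type*} [MeasurableSpace Ω] (μ : Measure Ω)
    (Z : Ω → ℝ≥0∞) (hZ : Measurable Z) (hfin : ∀ ω, Z ω ≠ ⊤) :
    ∫⁻ ω, Z ω ∂μ = ⨆ n : ℕ, ∫⁻ ω, Z ω ⊓ (n : ℝ≥0∞) ∂μ := by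
  rw [← lintegral_iSup (fun n => hZ.min measurable_const)
      (fun i j hij ω => inf_le_inf le_rfl (by exact_mod_cast Nat.cast_le.mpr hij))]
  exact lintegral_congr (fun ω => (ennreal_isup_inf_nat (Z ω) (hfin ω)).symm)

section drift
variable {p : ℕ} (a : ℕ → NNReal) (γ : NNReal)

noncomputable def edrift (p : ℕ) (a : ℕ → NNReal) (γ : NNReal) : ℕ → NNReal :=
  fun i => ∑ j ∈ Finset.range p, if i ≤ j then a j * γ ^ (p + i - 1 - j) else 0

lemma edrift_p : edrift p a γ p = 0 := by
  refine Finset.sum_eq_zero (fun j hj => ?_)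
  rw [Finset.mem_range] at hj
  rw [if_neg (by omega)]

lemma edrift_rec (i : ℕ) (hi : i < p) :
    γ * edrift p a γ i = a i * γ ^ p + edrift p a γ (i + 1) := by
  unfold edrift
  rw [Finset.mul_sum]
  have h1 : ∀ j ∈ Finset.range p, γ * (if i ≤ j then a j * γ ^ (p + i - 1 - j) else 0)
      = (if j = i then a i * γ ^ p else 0)
        + (if i + 1 ≤ j then a j * γ ^ (p + (i + 1) - 1 - j) else 0) := by
    intro j hj
    rw [Finset.mem_range] at hj
    by_cases hji : j = i
    · subst hji
      rw [if_pos le_rfl, if_pos rfl, if_neg (by omega), add_zero]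
      have h2 : p + j - 1 - j = p - 1 := by omega
      rw [h2, mul_left_comm, ← pow_succ']
      have h3 : p - 1 + 1 = p := by omega
      rw [h3]
    · by_cases hij : i ≤ j
      · have hij1 : i + 1 ≤ j := by omega
        rw [if_pos hij, if_neg hji, if_pos hij1, zero_add]
        have h2 : p + i - 1 - j + 1 = p + (i + 1) - 1 - j := by omega
        rw [mul_left_comm, ← pow_succ', h2]
      · rw [if_neg hij, if_neg hji, if_neg (by omega), mul_zero, zero_add]
  rw [Finset.sum_congr rfl h1, Finset.sum_add_distrib, Finset.sum_ite_eq' (Finset.range p) i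
    (fun _ => a i * γ ^ p), if_pos (Finset.mem_range.mpr hi)]

lemma edrift_zero_le (hγ : γ ≤ 1) : edrift p a γ 0 ≤ (∑ j ∈ Finset.range p, a j) := by
  unfold edrift
  refine Finset.sum_le_sum (fun j hj => ?_)
  rw [if_pos (Nat.zero_le j)]
  exact mul_le_of_le_one_right zero_le (pow_le_one₀ zero_le hγ)

lemma edrift_zero_ne (j0 : ℕ) (hj0 : j0 < p) (ha : a j0 ≠ 0) (hγ : γ ≠ 0) :
    edrift p a γ 0 ≠ 0 := by
  unfold edrift
  intro h
  rw [Finset.sum_eq_zero_iff] at h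
  have := h j0 (Finset.mem_range.mpr hj0)
  rw [if_pos (Nat.zero_le j0)] at this
  rcases mul_eq_zero.mp this with h' | h'
  · exact ha h'
  · exact pow_ne_zero _ hγ h'

lemma edrift_key (hγ : γ ≤ 1) (hle : (∑ j ∈ Finset.range p, a j) ≤ γ ^ p) (i : ℕ) (hi : i < p) :
    edrift p a γ 0 * a i + edrift p a γ (i + 1) ≤ γ * edrift p a γ i := by
  rw [edrift_rec a γ i hi]
  refine add_le_add_left ?_ _
  rw [mul_comm]
  exact mul_le_mul_right (le_trans (edrift_zero_le a γ hγ) hle) (a i)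

end drift

lemma ennreal_add_inf (a b M : ℝ≥0∞) : (a + b) ⊓ M ≤ a + (b ⊓ M) := by
  rcases le_total b M with h | h
  · rw [inf_eq_left.mpr h]; exact inf_le_left
  · rw [inf_eq_right.mpr h]; exact le_trans inf_le_right le_add_self



/-- Lemma 4.1(i): for a strictly stationary Skellam-ARCH(p) process with
`α = ∑ αᵢ < 1`, one has `E[X₀²] < ∞`, in fact `E[X₀²] ≤ ω/(1-α)`. -/
theorem stmt6 {Ω : Type*} [MeasurableSpace Ω] (μ : Measure Ω) [IsProbabilityMeasure μ]
    (p : ℕ) (w : NNReal) (α : Fin p → NNReal)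
    (X : ℤ → Ω → ℤ) (v : ℤ → Ω → NNReal)
    (hX : ∀ t, Measurable (X t)) (hv : ∀ t, Measurable (v t))
    -- strict stationarity: the law of the path is shift-invariant
    (hstat : ∀ t : ℤ,
      μ.map (fun ω (s : ℤ) => (X (s + t) ω, v (s + t) ω))
        = μ.map (fun ω (s : ℤ) => (X s ω, v s ω)))
    -- `v_t = ω + ∑ᵢ αᵢ X_{t-i}²`
    (hveq : ∀ (t : ℤ) (ω : Ω),
      v t ω = w + ∑ i : Fin p, α i * (((X (t - 1 - (i : ℕ)) ω).natAbs ^ 2 : ℕ) : NNReal))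
    -- `X_t ∣ 𝓕_{t-1} ∼ Skellam(v_t/2, v_t/2)`
    (hcond : ∀ (t : ℤ) (A : Set ℤ), MeasurableSet A →
      (fun ω => ((skellam (v t ω / 2) (v t ω / 2)) A).toReal)
        =ᵐ[μ] μ[fun ω => A.indicator (fun _ => (1 : ℝ)) (X t ω)
          | ⨆ (s : ℤ) (_ : s ≤ t - 1),
              MeasurableSpace.comap (fun ω => (X s ω, v s ω)) inferInstance])
    (hα : ∑ i, α i < 1) :
    (∫⁻ ω, ((X 0 ω).natAbs : ℝ≥0∞) ^ 2 ∂μ) < ⊤ ∧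
    (∫⁻ ω, ((X 0 ω).natAbs : ℝ≥0∞) ^ 2 ∂μ) ≤ (w : ℝ≥0∞) / ((1 : ℝ≥0∞) - (∑ i, α i : NNReal)) := by
  classical
  have hc0 := hcond 0
  set Y : ℤ → Ω → ℝ≥0∞ := fun s ω => ((X s ω).natAbs : ℝ≥0∞)^2 with hYdef
  have hYm : ∀ s, Measurable (Y s) :=
    fun s => (measurable_of_countable (fun k : ℤ => ((k.natAbs : ℝ≥0∞))^2)).comp (hX s)
  have hYfin : ∀ s ω, Y s ω ≠ ⊤ := by
    intro s ω
    simp only [hYdef]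
    exact ENNReal.pow_ne_top (ENNReal.natCast_ne_top _)
  set M0 : ℝ≥0∞ := ∫⁻ ω, Y 0 ω ∂μ with hM0def
  -- stationarity transfer
  have stat : ∀ (t : ℤ) (G : (ℤ → ℤ × NNReal) → ℝ≥0∞), Measurable G →
      ∫⁻ ω, G (fun s => (X (s+t) ω, v (s+t) ω)) ∂μ = ∫⁻ ω, G (fun s => (X s ω, v s ω)) ∂μ := by
    intro t G hG
    have h1 : Measurable (fun ω (s : ℤ) => (X (s + t) ω, v (s + t) ω)) :=
      measurable_pi_lambda _ (fun s => (hX (s+t)).prodMk (hv (s+t)))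
    have h2 : Measurable (fun ω (s : ℤ) => (X s ω, v s ω)) :=
      measurable_pi_lambda _ (fun s => (hX s).prodMk (hv s))
    rw [← lintegral_map hG h1, ← lintegral_map hG h2, hstat t]
  have statY : ∀ t : ℤ, ∫⁻ ω, Y t ω ∂μ = M0 := by
    intro t
    have := stat t (fun f => (((f 0).1.natAbs : ℝ≥0∞))^2)
      ((measurable_of_countable (fun k : ℤ => ((k.natAbs : ℝ≥0∞))^2)).comp
        (measurable_fst.comp (measurable_pi_apply 0)))
    simpa only [zero_add] using this
  -- σ-algebra facts
  have hm' : (⨆ (s : ℤ) (_ : s ≤ (0:ℤ) - 1),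
      MeasurableSpace.comap (fun ω => (X s ω, v s ω)) inferInstance) ≤ ‹MeasurableSpace Ω› := by
    refine iSup_le (fun s => iSup_le (fun _ => ?_))
    exact (((hX s).prodMk (hv s))).comap_le
  have hYm' : ∀ s : ℤ, s ≤ (0:ℤ)-1 → Measurable[⨆ (s : ℤ) (_ : s ≤ (0:ℤ) - 1),
      MeasurableSpace.comap (fun ω => (X s ω, v s ω)) inferInstance] (Y s) := by
    intro s hs
    have hpair : Measurable[⨆ (s : ℤ) (_ : s ≤ (0:ℤ) - 1),
        MeasurableSpace.comap (fun ω => (X s ω, v s ω)) inferInstance]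
        (fun ω => (X s ω, v s ω)) := by
      refine Measurable.mono (measurable_iff_comap_le.mpr le_rfl) ?_ le_rfl
      exact le_iSup₂ (f := fun (s : ℤ) (_ : s ≤ (0:ℤ)-1) =>
        MeasurableSpace.comap (fun ω => (X s ω, v s ω)) inferInstance) s hs
    exact (measurable_of_countable (fun k : ℤ => ((k.natAbs : ℝ≥0∞))^2)).comp
      (measurable_fst.comp hpair)
  -- hveq at 0 in ℝ≥0∞
  have hv0e : ∀ ω, ((v 0 ω : ℝ≥0∞))
      = (w : ℝ≥0∞) + ∑ i : Fin p, (α i : ℝ≥0∞) * Y ((0:ℤ)-1-(i:ℕ)) ω := by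
    intro ω
    rw [hveq 0 ω]
    push_cast
    rfl
  -- E[v 0] = w + αS * M0
  have hEv : ∫⁻ ω, ((v 0 ω : ℝ≥0∞)) ∂μ = (w : ℝ≥0∞) + ((∑ i, α i : NNReal) : ℝ≥0∞) * M0 := by
    rw [lintegral_congr hv0e, lintegral_add_left measurable_const, lintegral_const,
        measure_univ, mul_one,
        lintegral_finset_sum Finset.univ
          (f := fun (i : Fin p) ω => (α i : ℝ≥0∞) * Y ((0:ℤ)-1-(i:ℕ)) ω)
          (fun i _ => (measurable_const.mul (hYm _)))]
    congr 1
    calc ∑ i : Fin p, ∫⁻ ω, (α i : ℝ≥0∞) * Y ((0:ℤ)-1-(i:ℕ)) ω ∂μ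
        = ∑ i : Fin p, (α i : ℝ≥0∞) * M0 := by
          refine Finset.sum_congr rfl (fun i _ => ?_)
          rw [lintegral_const_mul _ (hYm _), statY]
      _ = ((∑ i, α i : NNReal) : ℝ≥0∞) * M0 := by
          rw [← Finset.sum_mul]
          norm_cast
  -- the basic recursion
  have hrec : M0 ≤ (w : ℝ≥0∞) + ((∑ i, α i : NNReal) : ℝ≥0∞) * M0 := by
    conv_lhs => rw [hM0def, lintegral_eq_isup_inf μ (Y 0) (hYm 0) (hYfin 0)]
    refine iSup_le (fun n => ?_)
    have ht := transfer _ μ (X 0) (v 0) (hX 0) (hv 0) hm' hc0 (n : ℝ≥0∞)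
      (ENNReal.natCast_ne_top n) (fun k _ => ((k.natAbs : ℝ≥0∞))^2 ⊓ (n:ℝ≥0∞))
      (fun k => measurable_const) (fun k ω => inf_le_right)
    calc ∫⁻ ω, Y 0 ω ⊓ (n : ℝ≥0∞) ∂μ
        = ∫⁻ ω, ∫⁻ k, ((k.natAbs : ℝ≥0∞))^2 ⊓ (n:ℝ≥0∞)
              ∂(skellam (v 0 ω/2) (v 0 ω/2)) ∂μ := ht
      _ ≤ ∫⁻ ω, ((v 0 ω : ℝ≥0∞)) ∂μ := by
          refine lintegral_mono (fun ω => ?_)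
          refine le_trans (lintegral_mono (fun k => inf_le_left)) ?_
          exact le_of_eq (skellam_half_m2 (v 0 ω))
      _ = (w : ℝ≥0∞) + ((∑ i, α i : NNReal) : ℝ≥0∞) * M0 := hEv
  -- finiteness
  have hfin : M0 ≠ ⊤ := by
    by_cases hz : (∑ i, α i : NNReal) = 0
    · rw [hz] at hrec
      simp only [ENNReal.coe_zero, zero_mul, add_zero] at hrec
      exact ne_top_of_le_ne_top ENNReal.coe_ne_top hrec
    -- drift case
    have hp : 0 < p := by
      rcases Nat.eq_zero_or_pos p with h | h
      · exfalso; apply hz; subst h; simp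
      · exact h
    set a : ℕ → NNReal := fun i => if h : i < p then α ⟨i, h⟩ else 0 with hadef
    have hasum : ∑ j ∈ Finset.range p, a j = (∑ i, α i : NNReal) := by
      rw [← Fin.sum_univ_eq_sum_range (fun j => a j) p]
      refine Finset.sum_congr rfl (fun i _ => ?_)
      rw [hadef]
      simp only [Fin.is_lt, dif_pos, Fin.eta]
    set γ : NNReal := (∑ i, α i : NNReal) ^ ((p : ℝ)⁻¹) with hγdef
    have hγp : γ ^ p = (∑ i, α i : NNReal) := by
      rw [hγdef, ← NNReal.rpow_natCast ((∑ i, α i : NNReal) ^ ((p:ℝ)⁻¹)) p, ← NNReal.rpow_mul,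
          inv_mul_cancel₀ (by exact_mod_cast hp.ne'), NNReal.rpow_one]
    have hγ1 : γ < 1 := NNReal.rpow_lt_one hα (by positivity)
    have hγ0 : γ ≠ 0 := by
      rw [hγdef]
      exact (NNReal.rpow_pos (pos_iff_ne_zero.mpr hz)).ne'
    have hγ0E : (γ : ℝ≥0∞) ≠ 0 := by exact_mod_cast hγ0
    have hγtop : (γ : ℝ≥0∞) ≠ ⊤ := ENNReal.coe_ne_top
    set e : ℕ → NNReal := edrift p a γ with hedef
    have he_p : e p = 0 := edrift_p a γ
    have hkey : ∀ i, i < p → e 0 * a i + e (i + 1) ≤ γ * e i :=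
      edrift_key a γ hγ1.le (hasum.trans_le (le_of_eq hγp.symm))
    have he0ne : e 0 ≠ 0 := by
      obtain ⟨j0, hj0⟩ : ∃ j0 : Fin p, α j0 ≠ 0 := by
        by_contra h
        push_neg at h
        exact hz (Finset.sum_eq_zero (fun i _ => h i))
      refine edrift_zero_ne a γ j0 j0.isLt ?_ hγ0
      rw [hadef]
      simpa only [Fin.is_lt, dif_pos, Fin.eta] using hj0
    have he0E : ((e 0 : NNReal) : ℝ≥0∞) ≠ 0 := by exact_mod_cast he0ne
    -- the processes
    set W : Ω → ℝ≥0∞ := fun ω => ∑ i ∈ Finset.range p, ((e i : NNReal) : ℝ≥0∞) * Y (-(i:ℤ)) ω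
      with hWdef
    set W1 : Ω → ℝ≥0∞ :=
      fun ω => ∑ i ∈ Finset.range p, ((e i : NNReal) : ℝ≥0∞) * Y ((0:ℤ)-1-(i:ℕ)) ω with hW1def
    set R : Ω → ℝ≥0∞ :=
      fun ω => ∑ i ∈ Finset.range p, ((e (i+1) : NNReal) : ℝ≥0∞) * Y ((0:ℤ)-1-(i:ℕ)) ω with hRdef
    have hWm : Measurable W :=
      Finset.measurable_sum _ (fun i _ => measurable_const.mul (hYm _))
    have hW1m : Measurable W1 :=
      Finset.measurable_sum _ (fun i _ => measurable_const.mul (hYm _))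
    have hRm' : Measurable[⨆ (s : ℤ) (_ : s ≤ (0:ℤ) - 1),
        MeasurableSpace.comap (fun ω => (X s ω, v s ω)) inferInstance] R :=
      Finset.measurable_sum _ (fun i _ => Measurable.mul measurable_const
        (hYm' ((0:ℤ)-1-(i:ℕ)) (by omega)))
    have hWfin : ∀ ω, W ω ≠ ⊤ := by
      intro ω
      rw [hWdef]
      refine (lt_top_iff_ne_top.mp ?_)
      refine ENNReal.sum_lt_top.mpr (fun i _ => ?_)
      exact ENNReal.mul_lt_top ENNReal.coe_lt_top (lt_top_iff_ne_top.mpr (hYfin _ ω))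
    have hWsplit : ∀ ω, W ω = ((e 0 : NNReal) : ℝ≥0∞) * Y 0 ω + R ω := by
      intro ω
      obtain ⟨q, hq⟩ : ∃ q, p = q + 1 := ⟨p - 1, by omega⟩
      have l1 : W ω = ((e 0 : NNReal) : ℝ≥0∞) * Y 0 ω
          + ∑ i ∈ Finset.range q, ((e (i+1) : NNReal) : ℝ≥0∞) * Y (-((i+1 : ℕ) : ℤ)) ω := by
        rw [hWdef]
        simp only
        rw [hq, Finset.sum_range_succ']
        rw [add_comm]
        norm_num
      have l2 : R ω = ∑ i ∈ Finset.range q, ((e (i+1) : NNReal) : ℝ≥0∞)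
          * Y ((0:ℤ)-1-(i:ℕ)) ω := by
        rw [hRdef]
        simp only
        rw [hq, Finset.sum_range_succ, show q + 1 = p from hq.symm, he_p]
        simp
      rw [l1, l2]
      congr 1
      refine Finset.sum_congr rfl (fun i _ => ?_)
      have harg : -((i+1 : ℕ) : ℤ) = (0:ℤ)-1-(i:ℕ) := by push_cast; ring
      rw [harg]
    -- stationarity for W
    have hstatW : ∀ M : ℝ≥0∞, ∫⁻ ω, W1 ω ⊓ M ∂μ = ∫⁻ ω, W ω ⊓ M ∂μ := by
      intro M
      have hG : Measurable (fun f : ℤ → ℤ × NNReal =>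
          (∑ i ∈ Finset.range p, ((e i : NNReal) : ℝ≥0∞)
            * ((((f (-(i:ℤ))).1.natAbs : ℝ≥0∞))^2)) ⊓ M) := by
        refine Measurable.min ?_ measurable_const
        refine Finset.measurable_sum _ (fun i _ => measurable_const.fun_mul ?_)
        exact (measurable_of_countable (fun k : ℤ => ((k.natAbs : ℝ≥0∞))^2)).comp
          (measurable_fst.comp (measurable_pi_apply _))
      have h := stat (-1) _ hG
      have hl : ∫⁻ ω, (fun f : ℤ → ℤ × NNReal =>
          (∑ i ∈ Finset.range p, ((e i : NNReal) : ℝ≥0∞)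
            * ((((f (-(i:ℤ))).1.natAbs : ℝ≥0∞))^2)) ⊓ M)
            (fun s => (X (s + -1) ω, v (s + -1) ω)) ∂μ
          = ∫⁻ ω, W1 ω ⊓ M ∂μ := by
        refine lintegral_congr (fun ω => ?_)
        simp only
        congr 1
        refine Finset.sum_congr rfl (fun i _ => ?_)
        have harg : -(i:ℤ) + -1 = (0:ℤ)-1-(i:ℕ) := by push_cast; ring
        rw [harg]
      rw [hl] at h
      exact h
    -- one-step recursion
    have claimA : ∀ M : ℝ≥0∞, M ≠ ⊤ →
        ∫⁻ ω, W ω ⊓ M ∂μ ≤ ((e 0 : NNReal) : ℝ≥0∞) * w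
          + (γ : ℝ≥0∞) * ∫⁻ ω, W ω ⊓ (M / (γ : ℝ≥0∞)) ∂μ := by
      intro M hM
      have ht := transfer _ μ (X 0) (v 0) (hX 0) (hv 0) hm' hc0 M hM
        (fun k ω => (((e 0 : NNReal) : ℝ≥0∞) * ((k.natAbs : ℝ≥0∞))^2 + R ω) ⊓ M)
        (fun k => Measurable.min (Measurable.add measurable_const hRm') measurable_const)
        (fun k ω => inf_le_right)
      have hv0r : ∀ ω, ((v 0 ω : ℝ≥0∞))
          = (w : ℝ≥0∞) + ∑ i ∈ Finset.range p, ((a i : NNReal) : ℝ≥0∞)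
              * Y ((0:ℤ)-1-(i:ℕ)) ω := by
        intro ω
        rw [hv0e ω]
        congr 1
        rw [← Fin.sum_univ_eq_sum_range (fun j => ((a j : NNReal) : ℝ≥0∞) * Y ((0:ℤ)-1-(j:ℕ)) ω) p]
        refine Finset.sum_congr rfl (fun i _ => ?_)
        rw [hadef]
        simp only [Fin.is_lt, dif_pos, Fin.eta]
      have ptwise : ∀ ω, (((e 0 : NNReal) : ℝ≥0∞) * ((v 0 ω : ℝ≥0∞)) + R ω) ⊓ M
          ≤ ((e 0 : NNReal) : ℝ≥0∞) * w + (γ : ℝ≥0∞) * (W1 ω ⊓ (M / (γ : ℝ≥0∞))) := by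
        intro ω
        have h1 : ((e 0 : NNReal) : ℝ≥0∞) * ((v 0 ω : ℝ≥0∞)) + R ω
            ≤ ((e 0 : NNReal) : ℝ≥0∞) * w + (γ : ℝ≥0∞) * W1 ω := by
          rw [hv0r ω, mul_add, add_assoc]
          refine add_le_add_right ?_ _
          rw [Finset.mul_sum, hRdef, hW1def]
          simp only
          rw [← Finset.sum_add_distrib, Finset.mul_sum]
          refine Finset.sum_le_sum (fun i hi => ?_)
          rw [Finset.mem_range] at hi
          calc ((e 0 : NNReal) : ℝ≥0∞) * (((a i : NNReal) : ℝ≥0∞) * Y ((0:ℤ)-1-(i:ℕ)) ω)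
              + ((e (i+1) : NNReal) : ℝ≥0∞) * Y ((0:ℤ)-1-(i:ℕ)) ω
              = (((e 0 * a i + e (i+1) : NNReal)) : ℝ≥0∞) * Y ((0:ℤ)-1-(i:ℕ)) ω := by
                push_cast; ring
            _ ≤ (((γ * e i : NNReal)) : ℝ≥0∞) * Y ((0:ℤ)-1-(i:ℕ)) ω := by
                refine mul_le_mul_left ?_ _
                exact_mod_cast hkey i hi
            _ = (γ : ℝ≥0∞) * (((e i : NNReal) : ℝ≥0∞) * Y ((0:ℤ)-1-(i:ℕ)) ω) := by
                push_cast; ring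
        calc (((e 0 : NNReal) : ℝ≥0∞) * ((v 0 ω : ℝ≥0∞)) + R ω) ⊓ M
            ≤ (((e 0 : NNReal) : ℝ≥0∞) * w + (γ : ℝ≥0∞) * W1 ω) ⊓ M := inf_le_inf_right M h1
          _ ≤ ((e 0 : NNReal) : ℝ≥0∞) * w + ((γ : ℝ≥0∞) * W1 ω ⊓ M) := ennreal_add_inf _ _ M
          _ = ((e 0 : NNReal) : ℝ≥0∞) * w + (γ : ℝ≥0∞) * (W1 ω ⊓ (M / (γ : ℝ≥0∞))) := by
              rw [ennreal_mul_inf, ENNReal.mul_div_cancel' (fun h => absurd h hγ0E) (fun h => absurd h hγtop)]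
      calc ∫⁻ ω, W ω ⊓ M ∂μ
          = ∫⁻ ω, ∫⁻ k, ((((e 0 : NNReal) : ℝ≥0∞) * ((k.natAbs : ℝ≥0∞))^2 + R ω) ⊓ M)
              ∂(skellam (v 0 ω / 2) (v 0 ω / 2)) ∂μ := by
            rw [← ht]
            refine lintegral_congr (fun ω => ?_)
            rw [hWsplit ω]
        _ ≤ ∫⁻ ω, (((e 0 : NNReal) : ℝ≥0∞) * ((v 0 ω : ℝ≥0∞)) + R ω) ⊓ M ∂μ :=
            lintegral_mono (fun ω => skellam_bound (v 0 ω) _ _ M)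
        _ ≤ ∫⁻ ω, (((e 0 : NNReal) : ℝ≥0∞) * w
              + (γ : ℝ≥0∞) * (W1 ω ⊓ (M / (γ : ℝ≥0∞)))) ∂μ :=
            lintegral_mono (fun ω => ptwise ω)
        _ = ((e 0 : NNReal) : ℝ≥0∞) * w + (γ : ℝ≥0∞) * ∫⁻ ω, W1 ω ⊓ (M / (γ : ℝ≥0∞)) ∂μ := by
            rw [lintegral_add_left measurable_const, lintegral_const, measure_univ, mul_one,
                lintegral_const_mul _ (hW1m.min measurable_const)]
        _ = ((e 0 : NNReal) : ℝ≥0∞) * w + (γ : ℝ≥0∞) * ∫⁻ ω, W ω ⊓ (M / (γ : ℝ≥0∞)) ∂μ := by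
            rw [hstatW]
    -- iterate
    have claimB : ∀ (N : ℝ≥0∞), N ≠ ⊤ → ∀ k : ℕ,
        ∫⁻ ω, W ω ⊓ N ∂μ ≤ ((e 0 : NNReal) : ℝ≥0∞) * w * (∑ j ∈ Finset.range k, (γ : ℝ≥0∞)^j)
          + (γ : ℝ≥0∞)^k * ∫⁻ ω, W ω ⊓ (N / (γ : ℝ≥0∞)^k) ∂μ := by
      intro N hN k
      induction k with
      | zero => simp
      | succ k ih =>
        have hdivne : N / (γ : ℝ≥0∞)^k ≠ ⊤ := by
          rw [div_eq_mul_inv]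
          exact ENNReal.mul_ne_top hN (ENNReal.inv_ne_top.mpr (pow_ne_zero k hγ0E))
        have hA := claimA (N / (γ : ℝ≥0∞)^k) hdivne
        have hdd : (N / (γ : ℝ≥0∞)^k) / (γ : ℝ≥0∞) = N / (γ : ℝ≥0∞)^(k+1) := by
          rw [div_eq_mul_inv, div_eq_mul_inv, div_eq_mul_inv, mul_assoc,
              ← ENNReal.mul_inv (Or.inr hγtop) (Or.inr hγ0E), ← pow_succ]
        rw [hdd] at hA
        calc ∫⁻ ω, W ω ⊓ N ∂μ
            ≤ ((e 0 : NNReal) : ℝ≥0∞) * w * (∑ j ∈ Finset.range k, (γ : ℝ≥0∞)^j)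
              + (γ : ℝ≥0∞)^k * ∫⁻ ω, W ω ⊓ (N / (γ : ℝ≥0∞)^k) ∂μ := ih
          _ ≤ ((e 0 : NNReal) : ℝ≥0∞) * w * (∑ j ∈ Finset.range k, (γ : ℝ≥0∞)^j)
              + (γ : ℝ≥0∞)^k * (((e 0 : NNReal) : ℝ≥0∞) * w
                + (γ : ℝ≥0∞) * ∫⁻ ω, W ω ⊓ (N / (γ : ℝ≥0∞)^(k+1)) ∂μ) :=
              add_le_add_right (mul_le_mul_right hA _) _
          _ = ((e 0 : NNReal) : ℝ≥0∞) * w * (∑ j ∈ Finset.range (k+1), (γ : ℝ≥0∞)^j)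
              + (γ : ℝ≥0∞)^(k+1) * ∫⁻ ω, W ω ⊓ (N / (γ : ℝ≥0∞)^(k+1)) ∂μ := by
              rw [Finset.sum_range_succ]
              ring
    -- uniform bound
    set C : ℝ≥0∞ := ((e 0 : NNReal) : ℝ≥0∞) * w * ((1 : ℝ≥0∞) - (γ : ℝ≥0∞))⁻¹ with hCdef
    have hCne : C ≠ ⊤ := by
      rw [hCdef]
      refine ENNReal.mul_ne_top (ENNReal.mul_ne_top ENNReal.coe_ne_top ENNReal.coe_ne_top) ?_
      rw [ENNReal.inv_ne_top, ne_eq, tsub_eq_zero_iff_le, not_le]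
      exact_mod_cast hγ1
    have boundN : ∀ n : ℕ, ∫⁻ ω, W ω ⊓ (n : ℝ≥0∞) ∂μ ≤ C := by
      intro n
      have h1 : ∀ k : ℕ, ∫⁻ ω, W ω ⊓ (n : ℝ≥0∞) ∂μ
          ≤ C + ∫⁻ ω, ((γ : ℝ≥0∞)^k * W ω) ⊓ (n : ℝ≥0∞) ∂μ := by
        intro k
        refine le_trans (claimB (n : ℝ≥0∞) (ENNReal.natCast_ne_top n) k) ?_
        refine add_le_add ?_ (le_of_eq ?_)
        · refine mul_le_mul_right ?_ _
          refine le_trans (ENNReal.sum_le_tsum (Finset.range k)) ?_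
          exact le_of_eq (ENNReal.tsum_geometric _)
        · rw [← lintegral_const_mul _ (hWm.min measurable_const)]
          refine lintegral_congr (fun ω => ?_)
          rw [ennreal_mul_inf,
              ENNReal.mul_div_cancel' (fun h => absurd h (pow_ne_zero k hγ0E)) (fun h => absurd h (ENNReal.pow_ne_top hγtop))]
      have h2 : Filter.Tendsto (fun k : ℕ => ∫⁻ ω, ((γ : ℝ≥0∞)^k * W ω) ⊓ (n : ℝ≥0∞) ∂μ)
          Filter.atTop (nhds 0) := by
        have := tendsto_lintegral_of_dominated_convergence (μ := μ)
          (F := fun k ω => ((γ : ℝ≥0∞)^k * W ω) ⊓ (n : ℝ≥0∞))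
          (f := fun _ => 0) (bound := fun _ => (n : ℝ≥0∞))
          (fun k => (measurable_const.mul hWm).min measurable_const)
          (fun k => Filter.Eventually.of_forall (fun ω => inf_le_right))
          (by rw [lintegral_const, measure_univ, mul_one]; exact ENNReal.natCast_ne_top n)
          (Filter.Eventually.of_forall (fun ω => ?_))
        · rwa [lintegral_zero] at this
        · have hpow : Filter.Tendsto (fun k : ℕ => (γ : ℝ≥0∞)^k * W ω) Filter.atTop (nhds 0) := by
            have h0 : Filter.Tendsto (fun k : ℕ => (γ : ℝ≥0∞)^k) Filter.atTop (nhds 0) :=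
              ENNReal.tendsto_pow_atTop_nhds_zero_of_lt_one (by exact_mod_cast hγ1)
            have := ENNReal.Tendsto.mul_const h0 (Or.inr (hWfin ω))
            rwa [zero_mul] at this
          refine tendsto_of_tendsto_of_tendsto_of_le_of_le tendsto_const_nhds hpow
            (fun k => zero_le) (fun k => inf_le_left)
      have h3 : Filter.Tendsto (fun k : ℕ => C + ∫⁻ ω, ((γ : ℝ≥0∞)^k * W ω) ⊓ (n : ℝ≥0∞) ∂μ)
          Filter.atTop (nhds (C + 0)) := Filter.Tendsto.const_add C h2
      have := ge_of_tendsto h3 (Filter.Eventually.of_forall h1)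
      rwa [add_zero] at this
    -- extract finiteness of M0
    have he0M : ((e 0 : NNReal) : ℝ≥0∞) * M0 ≤ C := by
      rw [hM0def, ← lintegral_const_mul _ (hYm 0),
          lintegral_eq_isup_inf μ _ (measurable_const.fun_mul (hYm 0))
            (fun ω => ENNReal.mul_ne_top ENNReal.coe_ne_top (hYfin 0 ω))]
      refine iSup_le (fun n => ?_)
      refine le_trans (lintegral_mono (fun ω => inf_le_inf_right _ ?_)) (boundN n)
      rw [hWsplit ω]
      exact le_add_right le_rfl
    intro hMtop
    rw [hMtop, ENNReal.mul_top he0E] at he0M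
    exact hCne (top_le_iff.mp he0M)
  -- conclusion
  have hαE : ((∑ i, α i : NNReal) : ℝ≥0∞) < 1 := by exact_mod_cast hα
  constructor
  · exact lt_top_iff_ne_top.mpr hfin
  · have h1 : (1:ℝ≥0∞) - ((∑ i, α i : NNReal) : ℝ≥0∞) ≠ 0 := by
      rw [ne_eq, tsub_eq_zero_iff_le]
      exact not_le.mpr hαE
    have h2 : (1:ℝ≥0∞) - ((∑ i, α i : NNReal) : ℝ≥0∞) ≠ ⊤ :=
      ne_top_of_le_ne_top one_ne_top tsub_le_self
    rw [ENNReal.le_div_iff_mul_le (Or.inl h1) (Or.inl h2)]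
    have hsplit : M0 * ((1:ℝ≥0∞) - ((∑ i, α i : NNReal) : ℝ≥0∞))
        + M0 * ((∑ i, α i : NNReal) : ℝ≥0∞) = M0 := by
      rw [← mul_add, tsub_add_cancel_of_le hαE.le, mul_one]
    have hle : M0 * ((1:ℝ≥0∞) - ((∑ i, α i : NNReal) : ℝ≥0∞)) ≤ M0 - M0 * ((∑ i, α i : NNReal) : ℝ≥0∞) := by
      refine ENNReal.le_sub_of_add_le_right (ENNReal.mul_ne_top hfin ENNReal.coe_ne_top) ?_
      rw [hsplit]
    refine le_trans hle ?_
    rw [tsub_le_iff_right]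
    calc M0 ≤ (w : ℝ≥0∞) + ((∑ i, α i : NNReal) : ℝ≥0∞) * M0 := hrec
    _ = (w : ℝ≥0∞) + M0 * ((∑ i, α i : NNReal) : ℝ≥0∞) := by rw [mul_comm]
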